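/- Let n ≥ 2, let ε₀ ≥ 0 and σ be real numbers with σ ≥ (n−2)·π/2 + ε₀, and let λ₁ ≥ λ₂ ≥ … ≥ λₙ be real numbers with ∑_{i=1}^n arctan(λᵢ) = σ. Then λ_{n−1} ≥ tan(ε₀/2)/2; in particular, if ε₀ > 0 then λᵢ > 0 for every i ≤ n−1, i.e. at most the smallest eigenvalue λₙ can be nonpositive. -/

import Mathlib

open Real Finset

/-- If `λ₁ ≥ … ≥ λₙ` satisfy `∑ arctan λᵢ = σ ≥ (n-2)π/2 + ε₀` with `ε₀ ≥ 0`,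
then `λ_{n-1} ≥ tan(ε₀/2)/2`; in particular, if `ε₀ > 0` then all eigenvalues
except possibly the smallest one are positive. -/
theorem dHYM_second_smallest_eigenvalue_bound
    (n : ℕ) (hn : 2 ≤ n) (ε₀ σ : ℝ) (hε : 0 ≤ ε₀)
    (hσ : ((n : ℝ) - 2) * π / 2 + ε₀ ≤ σ)
    (lam : Fin n → ℝ) (hlam : Antitone lam)
    (hsum : ∑ i, Real.arctan (lam i) = σ) :
    Real.tan (ε₀ / 2) / 2 ≤ lam ⟨n - 2, by omega⟩ ∧
      (0 < ε₀ → ∀ i : Fin n, (i : ℕ) < n - 1 → 0 < lam i) := by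
  have hn2 : n - 2 < n := by omega
  set k : Fin n := ⟨n - 2, hn2⟩ with hk
  -- bound each term
  have hb : ∀ i : Fin n, arctan (lam i) ≤
      if (i : ℕ) < n - 2 then π / 2 else arctan (lam k) := by
    intro i
    by_cases h : (i : ℕ) < n - 2
    · simp only [h, if_true]
      exact (Real.arctan_lt_pi_div_two _).le
    · simp only [h, if_false]
      exact Real.arctan_strictMono.monotone (hlam (by simp [hk, Fin.le_def]; omega))
  have hsum' : σ ≤ ∑ i : Fin n, (if (i : ℕ) < n - 2 then π / 2 else arctan (lam k)) := by
    rw [← hsum]; exact Finset.sum_le_sum fun i _ => hb i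
  have hcard1 : (univ.filter fun i : Fin n => (i : ℕ) < n - 2).card = n - 2 := by
    have : (univ.filter fun i : Fin n => (i : ℕ) < n - 2) = Finset.Iio k := by
      ext i; simp only [Finset.mem_filter, Finset.mem_univ, true_and, Finset.mem_Iio, Fin.lt_def, hk, Fin.val_mk]
    rw [this, Fin.card_Iio]
  have hcard2 : (univ.filter fun i : Fin n => ¬ (i : ℕ) < n - 2).card = 2 := by
    have := Finset.card_filter_add_card_filter_not
      (s := (univ : Finset (Fin n))) (p := fun i : Fin n => (i : ℕ) < n - 2)
    rw [hcard1, Finset.card_univ, Fintype.card_fin] at this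
    omega
  have hval : ∑ i : Fin n, (if (i : ℕ) < n - 2 then π / 2 else arctan (lam k))
      = ((n : ℝ) - 2) * (π / 2) + 2 * arctan (lam k) := by
    rw [Finset.sum_ite, Finset.sum_const, Finset.sum_const, hcard1, hcard2]
    have : ((n - 2 : ℕ) : ℝ) = (n : ℝ) - 2 := by
      push_cast [Nat.cast_sub hn]; ring
    simp [nsmul_eq_mul, this]
  have key : ε₀ / 2 ≤ arctan (lam k) := by
    rw [hval] at hsum'
    have := hσ.trans hsum'
    linarith
  have hlt : arctan (lam k) < π / 2 := Real.arctan_lt_pi_div_two _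
  have htan : Real.tan (ε₀ / 2) ≤ lam k := by
    by_contra h
    push_neg at h
    have := Real.arctan_strictMono h
    rw [Real.arctan_tan (by linarith) (by linarith)] at this
    linarith
  have htnn : 0 ≤ Real.tan (ε₀ / 2) :=
    Real.tan_nonneg_of_nonneg_of_le_pi_div_two (by linarith) (by linarith)
  refine ⟨by linarith, fun hε0 i hi => ?_⟩
  have hik : i ≤ k := by simp [hk, Fin.le_def]; omega
  have htp : 0 < Real.tan (ε₀ / 2) :=
    Real.tan_pos_of_pos_of_lt_pi_div_two (by linarith) (by linarith)
  have := hlam hik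
  linarith
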